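/- Let A, B be positive bounded operators on H and let B_c = Γ(S·E_R((0,1])) be the absolutely continuous part constructed from the spectral measure E_R of R = X*X. Then B_c is the maximum of the set of all A-absolutely continuous positive bounded operators C with C ≤ B: every such C satisfies C ≤ B_c. -/

import Mathlib

open ContinuousLinearMap Filter Topology
open scoped InnerProductSpace

noncomputable section

variable {H : Type*} [NormedAddCommGroup H] [InnerProductSpace ℂ H] [CompleteSpace H]

/-- `P` is the orthogonal projection of `H` onto the closure of the range of `T`. -/
def IsRangeProj (T P : H →L[ℂ] H) : Prop :=
  IsSelfAdjoint P ∧ P ∘L P = P ∧ Set.range (⇑P) = closure (Set.range (⇑T))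

/-- `S` is a positive square root of `A`. -/
def IsSqrtOf (A S : H →L[ℂ] H) : Prop := S.IsPositive ∧ S ∘L S = A

/-- `Y = V ∘ M` is the polar decomposition of `Y`: `M = |Y| = (Y*Y)^{1/2}` and `V` is the
partial isometry (isometric on the closure of `ran |Y|`) vanishing on the orthogonal
complement of the range of `|Y|`. -/
def IsPolarDecomp (Y V M : H →L[ℂ] H) : Prop :=
  M.IsPositive ∧ M ∘L M = adjoint Y ∘L Y ∧ V ∘L M = Y ∧
    (∀ ξ : H, ‖V (M ξ)‖ = ‖M ξ‖) ∧
    ∀ ξ : H, (∀ η : H, ⟪M η, ξ⟫_ℂ = 0) → V ξ = 0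

/-- Ando's mutual singularity `A ⊥ B`: no nonzero positive operator is dominated by both. -/
def MutuallySingular (A B : H →L[ℂ] H) : Prop :=
  ∀ C : H →L[ℂ] H, C.IsPositive → (A - C).IsPositive → (B - C).IsPositive → C = 0

/-- Ando's absolute continuity `B ⋖ A`: some sequence of positive operators `Bn` increases
strongly to `B` with `Bn ≤ αₙ A`. -/
def AbsCont (B A : H →L[ℂ] H) : Prop :=
  ∃ (Bn : ℕ → H →L[ℂ] H) (α : ℕ → ℝ),
    (∀ n, (Bn n).IsPositive) ∧ (∀ n, (Bn (n + 1) - Bn n).IsPositive) ∧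
    (∀ n, 0 < α n) ∧ (∀ n, ((α n : ℂ) • A - Bn n).IsPositive) ∧
    ∀ ξ : H, Tendsto (fun n => Bn n ξ) atTop (𝓝 (B ξ))

/-- `Pab` is the parallel sum `A : B`, i.e. the strong limit of `A (A + B + ε·1)⁻¹ B`
as `ε → 0+`. -/
def IsParallelSum (A B Pab : H →L[ℂ] H) : Prop :=
  ∀ ξ : H, Tendsto
    (fun ε : ℝ => (A ∘L Ring.inverse (A + B + (ε : ℂ) • (1 : H →L[ℂ] H)) ∘L B) ξ)
    (𝓝[>] (0 : ℝ)) (𝓝 (Pab ξ))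

/-- `C = [A]B`, Ando's maximal `A`-absolutely continuous part of `B`, defined as the
strong limit of the parallel sums `(nA) : B`. -/
def IsLebesguePart (A B C : H →L[ℂ] H) : Prop :=
  ∃ PS : ℕ → H →L[ℂ] H, (∀ n : ℕ, IsParallelSum ((n : ℂ) • A) B (PS n)) ∧
    ∀ ξ : H, Tendsto (fun n => PS n ξ) atTop (𝓝 (C ξ))

/-- The canonical data attached to a pair of positive operators `A, B`: the positive square
roots of `A`, `B`, `A + B`, and the (unique) Douglas contractions `X, Y` satisfying
`X (A+B)^{1/2} = A^{1/2}`, `Y (A+B)^{1/2} = B^{1/2}` and vanishing on the orthogonal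
complement of `ran (A+B)^{1/2}` (i.e. the operators on `K = cl ran (A+B)^{1/2}`, viewed
as operators on `H`). -/
structure DouglasTuple (A B : H →L[ℂ] H) where
  sqA : H →L[ℂ] H
  sqB : H →L[ℂ] H
  sqAB : H →L[ℂ] H
  X : H →L[ℂ] H
  Y : H →L[ℂ] H
  sqA_pos : sqA.IsPositive
  sqA_sq : sqA ∘L sqA = A
  sqB_pos : sqB.IsPositive
  sqB_sq : sqB ∘L sqB = B
  sqAB_pos : sqAB.IsPositive
  sqAB_sq : sqAB ∘L sqAB = A + B
  X_contr : ‖X‖ ≤ 1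
  Y_contr : ‖Y‖ ≤ 1
  X_eq : X ∘L sqAB = sqA
  Y_eq : Y ∘L sqAB = sqB
  X_supp : ∀ ξ : H, (∀ η : H, ⟪sqAB η, ξ⟫_ℂ = 0) → X ξ = 0
  Y_supp : ∀ ξ : H, (∀ η : H, ⟪sqAB η, ξ⟫_ℂ = 0) → Y ξ = 0

/-- `Φ` is a bounded Borel functional calculus for the self-adjoint operator `T`:
an ℝ-linear multiplicative unital self-adjointness-preserving map on (bounded) Borel
functions sending `id` to `T`, depending only on values on the spectrum, and continuous
under uniformly bounded pointwise convergence (in the strong operator topology). -/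
def IsBorelCalc (T : H →L[ℂ] H) (Φ : (ℝ → ℝ) → H →L[ℂ] H) : Prop :=
  (∀ f g : ℝ → ℝ, Measurable f → Measurable g → Φ (f + g) = Φ f + Φ g) ∧
  (∀ f g : ℝ → ℝ, Measurable f → Measurable g → Φ (f * g) = Φ f ∘L Φ g) ∧
  (∀ (c : ℝ) (f : ℝ → ℝ), Measurable f → Φ (c • f) = (c : ℂ) • Φ f) ∧
  (Φ (fun _ => 1) = 1) ∧
  (Φ id = T) ∧
  (∀ f : ℝ → ℝ, Measurable f → IsSelfAdjoint (Φ f)) ∧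
  (∀ f g : ℝ → ℝ, Measurable f → Measurable g →
    (∀ x : ℝ, (x : ℂ) ∈ spectrum ℂ T → f x = g x) → Φ f = Φ g) ∧
  (∀ (f : ℕ → ℝ → ℝ) (g : ℝ → ℝ) (M : ℝ), (∀ n, Measurable (f n)) → Measurable g →
    (∀ n x, |f n x| ≤ M) → (∀ x : ℝ, Tendsto (fun n => f n x) atTop (𝓝 (g x))) →
    ∀ ξ : H, Tendsto (fun n => Φ (f n) ξ) atTop (𝓝 (Φ g ξ)))

/-- `C` is the Pusz–Woronowicz functional calculus `φ(A, B)`: with `T = (A+B)^{1/2}`,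
`R = X*X`, `S = Y*Y = 1 - R` (on `K`), one has `C = T φ(R, S) T = T Φ(x ↦ φ(x, 1-x)) T`
for a Borel functional calculus `Φ` of `R`. -/
def IsPW (A B : H →L[ℂ] H) (φ : ℝ → ℝ → ℝ) (C : H →L[ℂ] H) : Prop :=
  ∃ (d : DouglasTuple A B) (Φ : (ℝ → ℝ) → H →L[ℂ] H),
    IsBorelCalc (adjoint d.X ∘L d.X) Φ ∧
    C = d.sqAB ∘L Φ (fun x => φ x (1 - x)) ∘L d.sqAB


section AuxStmt10

private lemma stmt10_cs_aux (a b c : ℝ) (ha : 0 ≤ a) (hc : 0 ≤ c)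
    (h : ∀ t : ℝ, 0 ≤ a + 2 * t * b + t ^ 2 * c) :
    Real.sqrt (a + 2 * b + c) ≤ Real.sqrt a + Real.sqrt c := by
  have hd : discrim c (2 * b) a ≤ 0 := discrim_le_zero (fun t => by nlinarith [h t])
  rw [discrim] at hd
  have hb2 : b ^ 2 ≤ a * c := by nlinarith
  have hb : b ≤ Real.sqrt a * Real.sqrt c := by
    rcases le_or_gt b 0 with hble | hbpos
    · exact hble.trans (by positivity)
    · calc b = Real.sqrt (b ^ 2) := (Real.sqrt_sq hbpos.le).symm
        _ ≤ Real.sqrt (a * c) := Real.sqrt_le_sqrt hb2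
        _ = Real.sqrt a * Real.sqrt c := Real.sqrt_mul ha c
  calc Real.sqrt (a + 2 * b + c) ≤ Real.sqrt ((Real.sqrt a + Real.sqrt c) ^ 2) :=
        Real.sqrt_le_sqrt (by nlinarith [Real.sq_sqrt ha, Real.sq_sqrt hc])
    _ = Real.sqrt a + Real.sqrt c := Real.sqrt_sq (by positivity)

private lemma stmt10_expand_aux (D : H →L[ℂ] H) (hsa : adjoint D = D) (x y : H) (t : ℝ) :
    (⟪D (x + (t : ℂ) • y), x + (t : ℂ) • y⟫_ℂ).re
      = (⟪D x, x⟫_ℂ).re + 2 * t * (⟪D x, y⟫_ℂ).re + t ^ 2 * (⟪D y, y⟫_ℂ).re := by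
  have h3 : ⟪D y, x⟫_ℂ = (starRingEnd ℂ) ⟪D x, y⟫_ℂ := by
    conv_lhs => rw [← hsa, ContinuousLinearMap.adjoint_inner_left]
    exact (inner_conj_symm (𝕜 := ℂ) y (D x)).symm
  rw [map_add, map_smul, inner_add_left, inner_add_right, inner_add_right,
    inner_smul_left, inner_smul_right, inner_smul_left, inner_smul_right, h3]
  simp only [Complex.conj_ofReal, Complex.add_re, Complex.mul_re,
    Complex.ofReal_re, Complex.ofReal_im, Complex.conj_re, Complex.conj_im]
  ring

private lemma stmt10_form_nonneg {D : H →L[ℂ] H} (hD : D.IsPositive) (x : H) :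
    0 ≤ (⟪D x, x⟫_ℂ).re := by
  simpa using (Complex.le_def.mp (hD.inner_nonneg_left x)).1

private lemma stmt10_form_triangle {D : H →L[ℂ] H} (hD : D.IsPositive) (x y : H) :
    Real.sqrt ((⟪D (x + y), x + y⟫_ℂ).re)
      ≤ Real.sqrt ((⟪D x, x⟫_ℂ).re) + Real.sqrt ((⟪D y, y⟫_ℂ).re) := by
  have hsa : adjoint D = D := ContinuousLinearMap.isSelfAdjoint_iff'.mp hD.isSelfAdjoint
  have hexp := stmt10_expand_aux D hsa x y
  have h1 : (⟪D (x + y), x + y⟫_ℂ).re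
      = (⟪D x, x⟫_ℂ).re + 2 * (⟪D x, y⟫_ℂ).re + (⟪D y, y⟫_ℂ).re := by
    have := hexp 1
    simpa using this
  rw [h1]
  refine stmt10_cs_aux _ _ _ (stmt10_form_nonneg hD x) (stmt10_form_nonneg hD y) ?_
  intro t
  have := stmt10_form_nonneg hD (x + (t : ℂ) • y)
  rw [hexp t] at this
  exact this

end AuxStmt10

/-- `B_c = Γ(S E_R((0,1]))` is the maximum of all `A`-absolutely continuous positive
operators `C ≤ B`. -/
theorem stmt10 (A B : H →L[ℂ] H) (hA : A.IsPositive) (hB : B.IsPositive)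
    (d : DouglasTuple A B) (Q : H →L[ℂ] H)
    (hQ : IsRangeProj (adjoint d.X ∘L d.X) Q)
    (C : H →L[ℂ] H) (hCpos : C.IsPositive) (hCB : (B - C).IsPositive) (hCA : AbsCont C A) :
    ((d.sqAB ∘L ((adjoint d.Y ∘L d.Y) ∘L Q) ∘L d.sqAB) - C).IsPositive := by
  -- unpack hypotheses
  obtain ⟨Bn, al, hBnpos, hBnmono, halpos, hBnle, hBntend⟩ := hCA
  obtain ⟨hQsa', hQidem, hQran⟩ := hQ
  obtain ⟨sA, sB, T, X, Y, hsApos, hsAsq, hsBpos, hsBsq, hTpos, hTsq, _, _,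
    hXeq, hYeq, hXsupp, hYsupp⟩ := d
  set R : H →L[ℂ] H := adjoint X ∘L X with hRdef
  set S : H →L[ℂ] H := adjoint Y ∘L Y with hSdef
  -- selfadjointness facts
  have hTsa : adjoint T = T := ContinuousLinearMap.isSelfAdjoint_iff'.mp hTpos.isSelfAdjoint
  have hQsa : adjoint Q = Q := ContinuousLinearMap.isSelfAdjoint_iff'.mp hQsa'
  have hsAsa : adjoint sA = sA := ContinuousLinearMap.isSelfAdjoint_iff'.mp hsApos.isSelfAdjoint
  have hsBsa : adjoint sB = sB := ContinuousLinearMap.isSelfAdjoint_iff'.mp hsBpos.isSelfAdjoint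
  have hRsa : adjoint R = R := by
    rw [hRdef, ContinuousLinearMap.adjoint_comp, ContinuousLinearMap.adjoint_adjoint]
  have hSsa : adjoint S = S := by
    rw [hSdef, ContinuousLinearMap.adjoint_comp, ContinuousLinearMap.adjoint_adjoint]
  have hSpos : S.IsPositive := by
    refine ⟨ContinuousLinearMap.isSelfAdjoint_iff_isSymmetric.mp (ContinuousLinearMap.isSelfAdjoint_iff'.mpr hSsa), fun x => ?_⟩
    have : S x = adjoint Y (Y x) := rfl
    rw [ContinuousLinearMap.reApplyInnerSelf, this, ContinuousLinearMap.adjoint_inner_left]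
    exact inner_self_nonneg
  -- pointwise versions of the Douglas relations
  have hXT : ∀ ζ, X (T ζ) = sA ζ := fun ζ => by
    rw [← ContinuousLinearMap.comp_apply, hXeq]
  have hYT : ∀ ζ, Y (T ζ) = sB ζ := fun ζ => by
    rw [← ContinuousLinearMap.comp_apply, hYeq]
  have hAform : ∀ ζ η, ⟪R (T ζ), T η⟫_ℂ = ⟪A ζ, η⟫_ℂ := by
    intro ζ η
    have e1 : R (T ζ) = adjoint X (X (T ζ)) := rfl
    rw [e1, ContinuousLinearMap.adjoint_inner_left, hXT, hXT]
    nth_rewrite 2 [← hsAsa]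
    rw [ContinuousLinearMap.adjoint_inner_right, ← ContinuousLinearMap.comp_apply, hsAsq]
  have hBform : ∀ ζ η, ⟪S (T ζ), T η⟫_ℂ = ⟪B ζ, η⟫_ℂ := by
    intro ζ η
    have e1 : S (T ζ) = adjoint Y (Y (T ζ)) := rfl
    rw [e1, ContinuousLinearMap.adjoint_inner_left, hYT, hYT]
    nth_rewrite 2 [← hsBsa]
    rw [ContinuousLinearMap.adjoint_inner_right, ← ContinuousLinearMap.comp_apply, hsBsq]
  have hABT : ∀ ζ, T (T ζ) = A ζ + B ζ := by
    intro ζ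
    rw [← ContinuousLinearMap.comp_apply, hTsq]; rfl
  -- the subspace K = cl ran T, as a double orthogonal complement
  set U : Submodule ℂ H := LinearMap.range (T : H →ₗ[ℂ] H) with hUdef
  have hUcc : ((Uᗮᗮ : Submodule ℂ H) : Set H) = closure (Set.range ⇑T) := by
    rw [Submodule.orthogonal_orthogonal_eq_closure, Submodule.topologicalClosure_coe]
    congr 1
  have hmemU : ∀ ζ, T ζ ∈ Uᗮᗮ := fun ζ =>
    Submodule.le_orthogonal_orthogonal U ⟨ζ, rfl⟩
  have hXadjK : ∀ η, adjoint X η ∈ Uᗮᗮ := by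
    intro η
    rw [Submodule.mem_orthogonal]
    intro u hu
    have hXu : X u = 0 := by
      refine hXsupp u fun ζ => ?_
      exact (Submodule.mem_orthogonal U u).mp hu (T ζ) ⟨ζ, rfl⟩
    rw [ContinuousLinearMap.adjoint_inner_right, hXu, inner_zero_left]
  have hYadjK : ∀ η, adjoint Y η ∈ Uᗮᗮ := by
    intro η
    rw [Submodule.mem_orthogonal]
    intro u hu
    have hYu : Y u = 0 := by
      refine hYsupp u fun ζ => ?_
      exact (Submodule.mem_orthogonal U u).mp hu (T ζ) ⟨ζ, rfl⟩
    rw [ContinuousLinearMap.adjoint_inner_right, hYu, inner_zero_left]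
  have hRK : ∀ v, R v ∈ Uᗮᗮ := fun v => hXadjK (X v)
  have hSK : ∀ v, S v ∈ Uᗮᗮ := fun v => hYadjK (Y v)
  have hclosedK : IsClosed ((Uᗮᗮ : Submodule ℂ H) : Set H) := Submodule.isClosed_orthogonal _
  have hranR_sub : Set.range ⇑R ⊆ ((Uᗮᗮ : Submodule ℂ H) : Set H) := by
    rintro _ ⟨v, rfl⟩; exact hRK v
  have hQK : ∀ v, Q v ∈ Uᗮᗮ := by
    intro v
    have h1 : Q v ∈ Set.range ⇑Q := ⟨v, rfl⟩
    rw [hQran] at h1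
    exact closure_minimal hranR_sub hclosedK h1
  have hQfix : ∀ v, Q (Q v) = Q v := fun v => by
    have := DFunLike.congr_fun hQidem v
    simpa using this
  have hQfixR : ∀ w, Q (R w) = R w := by
    intro w
    have h1 : R w ∈ Set.range ⇑Q := by
      rw [hQran]; exact subset_closure ⟨w, rfl⟩
    obtain ⟨u, hu⟩ := h1
    rw [← hu, hQfix]
  -- R + S is the identity on K
  have hfixT : ∀ ζ, R (T ζ) + S (T ζ) = T ζ := by
    intro ζ
    have huOrth : (R (T ζ) + S (T ζ) - T ζ) ∈ Uᗮ := by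
      rw [Submodule.mem_orthogonal]
      rintro _ ⟨η, rfl⟩
      have e2 : ⟪T ζ, T η⟫_ℂ = ⟪A ζ + B ζ, η⟫_ℂ := by
        rw [← hABT ζ, ← ContinuousLinearMap.adjoint_inner_left T η (T ζ), hTsa]
      have e3 : ⟪R (T ζ) + S (T ζ) - T ζ, T η⟫_ℂ = 0 := by
        rw [inner_sub_left, inner_add_left, hAform, hBform, e2, inner_add_left]
        ring
      rw [← inner_conj_symm, ContinuousLinearMap.coe_coe, e3, map_zero]
    have huK : (R (T ζ) + S (T ζ) - T ζ) ∈ Uᗮᗮ :=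
      Submodule.sub_mem _ (Submodule.add_mem _ (hRK _) (hSK _)) (hmemU ζ)
    have hu0 : R (T ζ) + S (T ζ) - T ζ = 0 :=
      inner_self_eq_zero.mp ((Submodule.mem_orthogonal _ _).mp huK _ huOrth)
    exact sub_eq_zero.mp hu0
  have hfixK : ∀ w : H, w ∈ ((Uᗮᗮ : Submodule ℂ H) : Set H) → R w + S w = w := by
    intro w hw
    rw [hUcc] at hw
    have hcl : IsClosed {v : H | R v + S v = v} :=
      isClosed_eq (R.continuous.add S.continuous) continuous_id
    have hsub : Set.range ⇑T ⊆ {v : H | R v + S v = v} := by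
      rintro _ ⟨ζ, rfl⟩; exact hfixT ζ
    exact closure_minimal hsub hcl hw
  have hfixQ : ∀ v, R (Q v) + S (Q v) = Q v := fun v => hfixK _ (hQK v)
  -- R ∘ Q = R and the key identity S (Q v) = Q v - R v
  have hRQ : ∀ v, R (Q v) = R v := by
    intro v
    refine ext_inner_right ℂ fun w => ?_
    have e1 : ⟪R (Q v), w⟫_ℂ = ⟪Q v, R w⟫_ℂ := by
      nth_rewrite 1 [← hRsa]; rw [ContinuousLinearMap.adjoint_inner_left]
    have e2 : ⟪Q v, R w⟫_ℂ = ⟪v, Q (R w)⟫_ℂ := by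
      nth_rewrite 1 [← hQsa]; rw [ContinuousLinearMap.adjoint_inner_left]
    have e3 : ⟪v, R w⟫_ℂ = ⟪R v, w⟫_ℂ := by
      nth_rewrite 2 [← hRsa]; rw [ContinuousLinearMap.adjoint_inner_left]
    rw [e1, e2, hQfixR, e3]
  have hSQv : ∀ v, S (Q v) = Q v - R v := by
    intro v
    have h1 := hfixQ v
    rw [hRQ] at h1
    exact eq_sub_of_add_eq (by rw [add_comm]; exact h1)
  -- the operator identity S ∘ Q = Q - R, and selfadjointness of the candidate
  have hSQop : S ∘L Q = Q - R := by
    ext v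
    simp only [ContinuousLinearMap.comp_apply, ContinuousLinearMap.sub_apply]
    exact hSQv v
  -- monotone convergence of the forms of Bn to the form of C
  have hmono : ∀ w : H, Monotone fun n => (⟪Bn n w, w⟫_ℂ).re := by
    intro w
    apply monotone_nat_of_le_succ
    intro n
    have h := stmt10_form_nonneg (hBnmono n) w
    simp only [ContinuousLinearMap.sub_apply, inner_sub_left, RCLike.re_to_complex,
      Complex.sub_re] at h
    linarith
  have htends : ∀ w : H, Tendsto (fun n => (⟪Bn n w, w⟫_ℂ).re) atTop (𝓝 ((⟪C w, w⟫_ℂ).re)) :=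
    fun w => (Complex.continuous_re.tendsto _).comp ((hBntend w).inner tendsto_const_nhds)
  have hle_C : ∀ n (w : H), (⟪Bn n w, w⟫_ℂ).re ≤ (⟪C w, w⟫_ℂ).re :=
    fun n w => (hmono w).ge_of_tendsto (htends w) n
  have hC_le_B : ∀ w : H, (⟪C w, w⟫_ℂ).re ≤ (⟪S (T w), T w⟫_ℂ).re := by
    intro w
    have h := stmt10_form_nonneg hCB w
    simp only [ContinuousLinearMap.sub_apply, inner_sub_left, RCLike.re_to_complex,
      Complex.sub_re] at h
    rw [hBform w w]
    linarith
  have hBn_le_A : ∀ n (w : H), (⟪Bn n w, w⟫_ℂ).re ≤ al n * (⟪R (T w), T w⟫_ℂ).re := by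
    intro n w
    have h := stmt10_form_nonneg (hBnle n) w
    simp only [ContinuousLinearMap.sub_apply, ContinuousLinearMap.smul_apply,
      inner_sub_left, inner_smul_left, Complex.conj_ofReal, RCLike.re_to_complex,
      Complex.sub_re, Complex.mul_re, Complex.ofReal_re, Complex.ofReal_im] at h
    rw [hAform w w]
    nlinarith [h]
  -- main form inequality
  have main : ∀ ξ : H, (⟪C ξ, ξ⟫_ℂ).re
      ≤ (⟪T (S (Q (T ξ))), ξ⟫_ℂ).re := by
    intro ξ
    set p : H := Q (T ξ) with hpdef
    set q : H := T ξ - p with hqdef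
    have hQq : Q q = 0 := by
      rw [hqdef, map_sub, hpdef, hQfix, sub_self]
    have hRq : R q = 0 := by
      refine ext_inner_left ℂ fun v => ?_
      rw [inner_zero_right]
      have e1 : ⟪v, R q⟫_ℂ = ⟪R v, q⟫_ℂ := by
        conv_lhs => rw [← hRsa]
        exact ContinuousLinearMap.adjoint_inner_right R v q
      have h1 : R v ∈ Set.range ⇑Q := by
        rw [hQran]; exact subset_closure ⟨v, rfl⟩
      obtain ⟨w, hw⟩ := h1
      have e2 : ⟪Q w, q⟫_ℂ = ⟪w, Q q⟫_ℂ := by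
        nth_rewrite 1 [← hQsa]; rw [ContinuousLinearMap.adjoint_inner_left]
      rw [e1, ← hw, e2, hQq, inner_zero_right]
    -- the value of the candidate's form
    have hSp : S p = p - R (T ξ) := by rw [hpdef, hSQv]
    have hpq : ⟪S p, q⟫_ℂ = 0 := by
      rw [hSp, inner_sub_left]
      have e1 : ⟪p, q⟫_ℂ = 0 := by
        rw [hpdef]
        nth_rewrite 1 [← hQsa]
        rw [ContinuousLinearMap.adjoint_inner_left, hQq, inner_zero_right]
      have e2 : ⟪R (T ξ), q⟫_ℂ = 0 := by
        nth_rewrite 1 [← hRsa]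
        rw [ContinuousLinearMap.adjoint_inner_left, hRq, inner_zero_right]
      rw [e1, e2, sub_zero]
    have hBcval : ⟪T (S (Q (T ξ))), ξ⟫_ℂ = ⟪S p, p⟫_ℂ := by
      have e0 : T (S (Q (T ξ))) = T (S p) := rfl
      have e1 : ⟪T (S p), ξ⟫_ℂ = ⟪S p, T ξ⟫_ℂ := by
        nth_rewrite 1 [← hTsa]; rw [ContinuousLinearMap.adjoint_inner_left]
      have e2 : ⟪S p, T ξ⟫_ℂ = ⟪S p, p⟫_ℂ + ⟪S p, q⟫_ℂ := by
        rw [hqdef, inner_sub_right]; ring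
      rw [e0, e1, e2, hpq, add_zero]
    rw [hBcval]
    -- approximate q by elements of ran T
    have hqK : q ∈ closure (Set.range ⇑T) := by
      rw [← hUcc]
      exact Submodule.sub_mem _ (hmemU ξ) (hQK (T ξ))
    obtain ⟨u, huT, hulim⟩ := mem_closure_iff_seq_limit.mp hqK
    choose eta heta using huT
    have hM0 : 0 ≤ (⟪S p, p⟫_ℂ).re := stmt10_form_nonneg hSpos p
    -- per-n bound
    have hkey : ∀ n, (⟪Bn n ξ, ξ⟫_ℂ).re ≤ (⟪S p, p⟫_ℂ).re := by
      intro n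
      have hstep : ∀ k, Real.sqrt ((⟪Bn n ξ, ξ⟫_ℂ).re)
          ≤ Real.sqrt ((⟪S (T ξ - u k), T ξ - u k⟫_ℂ).re)
            + Real.sqrt (al n * (⟪R (u k), u k⟫_ℂ).re) := by
        intro k
        have htri := stmt10_form_triangle (hBnpos n) (ξ - eta k) (eta k)
        have hsac : ξ - eta k + eta k = ξ := by abel
        rw [hsac] at htri
        refine htri.trans (add_le_add ?_ ?_)
        · apply Real.sqrt_le_sqrt
          have h2 : T (ξ - eta k) = T ξ - u k := by rw [map_sub, heta k]
          rw [← h2]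
          exact (hle_C n (ξ - eta k)).trans (hC_le_B (ξ - eta k))
        · apply Real.sqrt_le_sqrt
          have h1 := hBn_le_A n (eta k)
          rwa [heta k] at h1
      have t1 : Tendsto (fun k => T ξ - u k) atTop (𝓝 p) := by
        have h0 : Tendsto (fun k => T ξ - u k) atTop (𝓝 (T ξ - q)) :=
          Tendsto.sub tendsto_const_nhds hulim
        have e : T ξ - q = p := by rw [hqdef]; abel
        rwa [e] at h0
      have t2 : Tendsto (fun k => (⟪S (T ξ - u k), T ξ - u k⟫_ℂ).re) atTop
          (𝓝 ((⟪S p, p⟫_ℂ).re)) :=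
        (Complex.continuous_re.tendsto _).comp (((S.continuous.tendsto p).comp t1).inner t1)
      have t3 : Tendsto (fun k => (⟪R (u k), u k⟫_ℂ).re) atTop (𝓝 0) := by
        have h1 : Tendsto u atTop (𝓝 q) := hulim
        have h2 := (Complex.continuous_re.tendsto _).comp
          (((R.continuous.tendsto q).comp h1).inner h1)
        rwa [hRq, inner_zero_left, Complex.zero_re] at h2
      have t4 : Tendsto (fun k => Real.sqrt ((⟪S (T ξ - u k), T ξ - u k⟫_ℂ).re)
          + Real.sqrt (al n * (⟪R (u k), u k⟫_ℂ).re)) atTop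
          (𝓝 (Real.sqrt ((⟪S p, p⟫_ℂ).re) + Real.sqrt (al n * 0))) :=
        t2.sqrt.add ((t3.const_mul (al n)).sqrt)
      rw [mul_zero, Real.sqrt_zero, add_zero] at t4
      have hfin : Real.sqrt ((⟪Bn n ξ, ξ⟫_ℂ).re) ≤ Real.sqrt ((⟪S p, p⟫_ℂ).re) :=
        ge_of_tendsto' t4 hstep
      have h0 : 0 ≤ (⟪Bn n ξ, ξ⟫_ℂ).re := stmt10_form_nonneg (hBnpos n) ξ
      nlinarith [Real.sq_sqrt h0, Real.sq_sqrt hM0, Real.sqrt_nonneg ((⟪S p, p⟫_ℂ).re),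
        Real.sqrt_nonneg ((⟪Bn n ξ, ξ⟫_ℂ).re)]
    exact le_of_tendsto (htends ξ) (Filter.Eventually.of_forall hkey)
  -- assemble the positivity statement
  constructor
  · have hBcsa : IsSelfAdjoint (T ∘L (S ∘L Q) ∘L T) := by
      rw [ContinuousLinearMap.isSelfAdjoint_iff']
      rw [hSQop]
      rw [ContinuousLinearMap.adjoint_comp, ContinuousLinearMap.adjoint_comp,
        map_sub, hQsa, hRsa, hTsa, ContinuousLinearMap.comp_assoc]
    exact ContinuousLinearMap.isSelfAdjoint_iff_isSymmetric.mp (hBcsa.sub hCpos.isSelfAdjoint)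
  · intro ξ
    have h := main ξ
    rw [ContinuousLinearMap.reApplyInnerSelf]
    simp only [ContinuousLinearMap.sub_apply, ContinuousLinearMap.comp_apply,
      inner_sub_left, RCLike.re_to_complex, Complex.sub_re]
    linarith


end
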